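/- If ζₙ → ζ in the Wasserstein₁ sense (weak convergence plus convergence of first moments) on the space of finite nonnegative Borel measures on [0,∞) with finite first moment, then F_{ζₙ} converges to F_ζ uniformly on [0,∞). -/

import Mathlib

open MeasureTheory Filter

/-- `F_ζ(x) = ∫ min(y,x) dζ(y)`. -/
noncomputable def Fz (ζ : Measure ℝ) (x : ℝ) : ℝ := ∫ y, min y x ∂ζ

lemma min_integrable (μ : Measure ℝ) [IsFiniteMeasure μ] (h : Integrable id μ) (x : ℝ) :
    Integrable (fun y => min y x) μ := by
  apply (h.norm.add (integrable_const |x|)).mono'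
  · exact (measurable_id.min measurable_const).aestronglyMeasurable
  · filter_upwards with y
    simpa [Real.norm_eq_abs] using (abs_min_le_max_abs_abs ..).trans
      (max_le_add_of_nonneg (abs_nonneg _) (abs_nonneg _))

lemma ae_nonneg (μ : Measure ℝ) (h : μ (Set.Iio 0) = 0) : ∀ᵐ y ∂μ, 0 ≤ y := by
  rw [ae_iff]
  convert h using 2
  ext y; simp [not_le, Set.mem_Iio]

lemma Fz_mono (μ : Measure ℝ) [IsFiniteMeasure μ] (h : Integrable id μ) {x x' : ℝ}
    (hxx : x ≤ x') : Fz μ x ≤ Fz μ x' :=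
  integral_mono (min_integrable μ h x) (min_integrable μ h x')
    (fun y => min_le_min le_rfl hxx)

lemma Fz_le_mom (μ : Measure ℝ) [IsFiniteMeasure μ] (h : Integrable id μ) (x : ℝ) :
    Fz μ x ≤ ∫ y, y ∂μ :=
  integral_mono (min_integrable μ h x) h (fun y => min_le_left y x)

lemma Fz_lip (μ : Measure ℝ) [IsFiniteMeasure μ] (h : Integrable id μ) (x x' : ℝ) :
    |Fz μ x - Fz μ x'| ≤ |x - x'| * (μ Set.univ).toReal := by
  rw [Fz, Fz, ← integral_sub (min_integrable μ h x) (min_integrable μ h x')]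
  have : ∀ᵐ y ∂μ, ‖min y x - min y x'‖ ≤ |x - x'| := by
    filter_upwards with y
    rw [Real.norm_eq_abs]
    rcases le_total y x with h1 | h1 <;> rcases le_total y x' with h2 | h2 <;>
      simp [min_eq_left, min_eq_right, h1, h2, abs_le] <;> constructor <;>
      linarith [le_abs_self (x - x'), neg_abs_le (x - x')]
  simpa [Real.norm_eq_abs, Measure.real] using norm_integral_le_of_norm_le_const this

lemma ev_abs {f : ℕ → ℝ} {a ε : ℝ} (h : Tendsto f atTop (nhds a)) (hε : 0 < ε) :
    ∀ᶠ n in atTop, |f n - a| < ε := by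
  have := h.eventually (Metric.ball_mem_nhds a hε)
  simpa [Real.dist_eq] using this

lemma Fz_tail (ζ : Measure ℝ) [IsFiniteMeasure ζ] (hsupp : ζ (Set.Iio 0) = 0)
    (hint : Integrable id ζ) :
    Tendsto (fun M : ℝ => Fz ζ M) atTop (nhds (∫ y, y ∂ζ)) := by
  apply tendsto_integral_filter_of_dominated_convergence (fun y => |y|)
  · filter_upwards with M
    exact (measurable_id.min measurable_const).aestronglyMeasurable
  · filter_upwards [eventually_ge_atTop (0 : ℝ)] with M hM
    filter_upwards [ae_nonneg ζ hsupp] with y hy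
    rw [Real.norm_eq_abs, abs_of_nonneg (le_min hy hM), abs_of_nonneg hy]
    exact min_le_left y M
  · exact hint.abs
  · filter_upwards with y
    apply Tendsto.congr' _ tendsto_const_nhds
    filter_upwards [eventually_ge_atTop y] with M hM
    exact (min_eq_left hM).symm

theorem stmt2 (ζn : ℕ → Measure ℝ) (ζ : Measure ℝ)
    (hfin : ∀ n, IsFiniteMeasure (ζn n)) [IsFiniteMeasure ζ]
    (hsuppn : ∀ n, ζn n (Set.Iio 0) = 0) (hsupp : ζ (Set.Iio 0) = 0)
    (hintn : ∀ n, Integrable id (ζn n)) (hint : Integrable id ζ)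
    (hweak : ∀ f : BoundedContinuousFunction ℝ ℝ,
      Tendsto (fun n => ∫ y, f y ∂(ζn n)) atTop (nhds (∫ y, f y ∂ζ)))
    (hmom : Tendsto (fun n => ∫ y, y ∂(ζn n)) atTop (nhds (∫ y, y ∂ζ))) :
    TendstoUniformlyOn (fun n x => Fz (ζn n) x) (Fz ζ) atTop (Set.Ici 0) := by
  haveI := hfin
  -- pointwise convergence of Fz at each x ≥ 0
  have hpt : ∀ x : ℝ, 0 ≤ x →
      Tendsto (fun n => Fz (ζn n) x) atTop (nhds (Fz ζ x)) := by
    intro x hx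
    have hcont : Continuous (fun y : ℝ => min (max y 0) x) := by continuity
    set f : BoundedContinuousFunction ℝ ℝ :=
      BoundedContinuousFunction.mkOfBound ⟨fun y => min (max y 0) x, hcont⟩ x
        (fun a b => by
          have h1 : ∀ c : ℝ, 0 ≤ min (max c 0) x := fun c => le_min (le_max_right c 0) hx
          have h2 : ∀ c : ℝ, min (max c 0) x ≤ x := fun c => min_le_right _ _
          rw [Real.dist_eq, abs_le]
          constructor <;> simp only [ContinuousMap.coe_mk] <;>
            [linarith [h1 a, h2 b]; linarith [h2 a, h1 b]]) with hf
    have key : ∀ (μ : Measure ℝ), μ (Set.Iio 0) = 0 → ∫ y, f y ∂μ = Fz μ x := by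
      intro μ hμ
      apply integral_congr_ae
      filter_upwards [ae_nonneg μ hμ] with y hy
      show min (max y 0) x = min y x
      rw [max_eq_left hy]
    have := hweak f
    rw [key ζ hsupp] at this
    exact this.congr (fun n => key (ζn n) (hsuppn n))
  -- main argument
  rw [Metric.tendstoUniformlyOn_iff]
  intro ε hε
  set ε' := ε / 4 with hε'def
  have hε' : 0 < ε' := by positivity
  -- bound on masses
  have hmass : Tendsto (fun n => ((ζn n) Set.univ).toReal) atTop
      (nhds ((ζ Set.univ).toReal)) := by
    have := hweak (BoundedContinuousFunction.const ℝ (1 : ℝ))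
    simpa [integral_const, smul_eq_mul, Measure.real] using this
  obtain ⟨C0, hC0⟩ := hmass.bddAbove_range
  set C : ℝ := max C0 ((ζ Set.univ).toReal) + 1 with hCdef
  have hC1 : 1 ≤ C := by
    have : (0:ℝ) ≤ max C0 ((ζ Set.univ).toReal) :=
      le_trans ENNReal.toReal_nonneg (le_max_right _ _)
    linarith
  have hCpos : 0 < C := lt_of_lt_of_le one_pos hC1
  have hCn : ∀ n, ((ζn n) Set.univ).toReal ≤ C := by
    intro n
    have := hC0 (Set.mem_range_self n)
    have h2 : C0 ≤ C := by
      rw [hCdef]; linarith [le_max_left C0 ((ζ Set.univ).toReal)]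
    linarith
  have hCζ : (ζ Set.univ).toReal ≤ C := by
    rw [hCdef]; linarith [le_max_right C0 ((ζ Set.univ).toReal)]
  -- tail cutoff M
  obtain ⟨M0, hM0⟩ := Metric.tendsto_atTop.mp (Fz_tail ζ hsupp hint) ε' hε'
  set M : ℝ := max M0 0 with hMdef
  have hMtail : (∫ y, y ∂ζ) - Fz ζ M < ε' := by
    have := hM0 M (le_max_left _ _)
    rw [Real.dist_eq] at this
    have hle := Fz_le_mom ζ hint M
    rw [abs_of_nonpos (by linarith)] at this
    linarith
  have hM0' : 0 ≤ M := le_max_right _ _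
  -- grid
  set δ : ℝ := ε' / C with hδdef
  have hδpos : 0 < δ := by positivity
  set N : ℕ := ⌈M / δ⌉₊ with hNdef
  have hMN : M ≤ N * δ := by
    rw [hNdef]
    calc M = (M / δ) * δ := by field_simp
    _ ≤ (⌈M / δ⌉₊ : ℝ) * δ := by
        apply mul_le_mul_of_nonneg_right (Nat.le_ceil _) hδpos.le
  -- eventual closeness at grid points
  have hgridev : ∀ᶠ n in atTop, ∀ k ∈ Finset.range (N + 1),
      |Fz (ζn n) (k * δ) - Fz ζ (k * δ)| < ε' := by
    rw [Filter.eventually_all_finset]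
    intro k _
    exact ev_abs (hpt (k * δ) (by positivity)) hε'
  have hmomev : ∀ᶠ n in atTop, |(∫ y, y ∂(ζn n)) - ∫ y, y ∂ζ| < ε' :=
    ev_abs hmom hε'
  filter_upwards [hgridev, hmomev] with n hgrid hmomn
  intro x hx
  rw [Set.mem_Ici] at hx
  rw [Real.dist_eq]
  have hgoal : |Fz (ζn n) x - Fz ζ x| < ε := by
    by_cases hxM : x ≤ N * δ
    · -- near a grid point
      set k : ℕ := ⌊x / δ⌋₊ with hkdef
      have hk1 : (k : ℝ) * δ ≤ x := by
        rw [hkdef]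
        calc (⌊x / δ⌋₊ : ℝ) * δ ≤ (x / δ) * δ :=
              mul_le_mul_of_nonneg_right (Nat.floor_le (by positivity)) hδpos.le
        _ = x := by field_simp
      have hk2 : x < (k + 1 : ℝ) * δ := by
        have := Nat.lt_floor_add_one (x / δ)
        calc x = (x / δ) * δ := by field_simp
        _ < ((⌊x / δ⌋₊ : ℝ) + 1) * δ := by
            apply mul_lt_mul_of_pos_right this hδpos
      have hkN : k ∈ Finset.range (N + 1) := by
        rw [Finset.mem_range, Nat.lt_succ_iff, hkdef]
        have : x / δ ≤ (N : ℝ) := by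
          rw [div_le_iff₀ hδpos]; exact hxM
        calc ⌊x / δ⌋₊ ≤ ⌊(N : ℝ)⌋₊ := Nat.floor_le_floor this
        _ = N := Nat.floor_natCast N
      have hdx : |x - k * δ| ≤ δ := by
        rw [abs_of_nonneg (by linarith)]; nlinarith
      have hlip1 : |Fz (ζn n) x - Fz (ζn n) (k * δ)| ≤ ε' := by
        calc |Fz (ζn n) x - Fz (ζn n) (k * δ)|
            ≤ |x - k * δ| * ((ζn n) Set.univ).toReal := Fz_lip _ (hintn n) _ _
        _ ≤ δ * C := by
            apply mul_le_mul hdx (hCn n) ENNReal.toReal_nonneg hδpos.le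
        _ = ε' := by rw [hδdef]; field_simp
      have hlip2 : |Fz ζ x - Fz ζ (k * δ)| ≤ ε' := by
        calc |Fz ζ x - Fz ζ (k * δ)|
            ≤ |x - k * δ| * (ζ Set.univ).toReal := Fz_lip _ hint _ _
        _ ≤ δ * C := by
            apply mul_le_mul hdx hCζ ENNReal.toReal_nonneg hδpos.le
        _ = ε' := by rw [hδdef]; field_simp
      have hg := hgrid k hkN
      have h1 := abs_lt.mp hg
      have h2 := abs_le.mp hlip1
      have h3 := abs_le.mp hlip2
      rw [abs_lt]
      constructor <;> [linarith; linarith]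
    · -- tail region
      push_neg at hxM
      have hNk : (N : ℕ) ∈ Finset.range (N + 1) := Finset.self_mem_range_succ N
      have hg := abs_lt.mp (hgrid N hNk)
      have hmn := abs_lt.mp hmomn
      have h1 : Fz ζ (N * δ) ≤ Fz ζ x := Fz_mono ζ hint hxM.le
      have h2 : Fz ζ x ≤ ∫ y, y ∂ζ := Fz_le_mom ζ hint x
      have h3 : Fz ζ M ≤ Fz ζ (N * δ) := Fz_mono ζ hint hMN
      have h4 : Fz (ζn n) (N * δ) ≤ Fz (ζn n) x := Fz_mono _ (hintn n) hxM.le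
      have h5 : Fz (ζn n) x ≤ ∫ y, y ∂(ζn n) := Fz_le_mom _ (hintn n) x
      rw [abs_lt]
      constructor <;> [linarith; linarith]
  calc |Fz ζ x - Fz (ζn n) x| = |Fz (ζn n) x - Fz ζ x| := abs_sub_comm _ _
  _ < ε := hgoal
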